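/- With the setup of the lower bound construction (P = L ∪ B ∪ R as above, a k-coloring in which every bottomless rectangle with ≥ b points contains all colors, ℓ low colors being the colors used on B), the total number of low points in L is at least ∑_{i=0}^{ℓ−1} ⌊n/(b−i)⌋. -/

import Mathlib

open scoped Classical

/-- Membership in the bottomless rectangle `{(x,y) : a ≤ x ≤ b, y ≤ c}`. -/
def InBottomless (a b c : ℝ) (p : ℝ × ℝ) : Prop :=
  a ≤ p.1 ∧ p.1 ≤ b ∧ p.2 ≤ c

/-- The left part `L = {(i - n, 2i) : i ∈ [n]}`. -/
noncomputable def Lset (n : ℕ) : Finset (ℝ × ℝ) :=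
  (Finset.Icc 1 n).image (fun i => ((i : ℝ) - (n : ℝ), 2 * (i : ℝ)))

/-- The bottom part `B = {(i, 0) : i ∈ [a]}`. -/
noncomputable def Bset (a : ℕ) : Finset (ℝ × ℝ) :=
  (Finset.Icc 1 a).image (fun i => ((i : ℝ), 0))

/-- The right part `R = {(n + a + i, 2n + 1 - 2i) : i ∈ [n]}`. -/
noncomputable def Rset (n a : ℕ) : Finset (ℝ × ℝ) :=
  (Finset.Icc 1 n).image
    (fun i => ((n : ℝ) + (a : ℝ) + (i : ℝ), 2 * (n : ℝ) + 1 - 2 * (i : ℝ)))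

/-- The low colors: those used at least once on a point of `B`. -/
noncomputable def lowColors (a k : ℕ) (χ : ℝ × ℝ → Fin k) : Finset (Fin k) :=
  Finset.univ.filter (fun c => ∃ q ∈ Bset a, χ q = c)

section Aux

lemma mem_Lset {n : ℕ} {q : ℝ × ℝ} :
    q ∈ Lset n ↔ ∃ i : ℕ, (1 ≤ i ∧ i ≤ n) ∧ q = ((i : ℝ) - (n : ℝ), 2 * (i : ℝ)) := by
  rw [Lset]
  simp only [Finset.mem_image, Finset.mem_Icc]
  constructor
  · rintro ⟨x, hx, rfl⟩
    simp at hx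
    obtain ⟨i, hi, rfl⟩ := hx
    exact ⟨i, hi, rfl⟩
  · rintro ⟨i, hi, rfl⟩
    refine ⟨(i : ℝ), ?_, rfl⟩
    simp
    exact hi

lemma mem_Bset {a : ℕ} {q : ℝ × ℝ} :
    q ∈ Bset a ↔ ∃ i : ℕ, (1 ≤ i ∧ i ≤ a) ∧ q = ((i : ℝ), (0 : ℝ)) := by
  rw [Bset]
  simp only [Finset.mem_image, Finset.mem_Icc]
  constructor
  · rintro ⟨x, hx, rfl⟩
    simp at hx
    obtain ⟨i, hi, rfl⟩ := hx
    exact ⟨i, hi, rfl⟩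
  · rintro ⟨i, hi, rfl⟩
    refine ⟨(i : ℝ), ?_, rfl⟩
    simp
    exact hi

lemma mem_Rset {n a : ℕ} {q : ℝ × ℝ} :
    q ∈ Rset n a ↔ ∃ i : ℕ, (1 ≤ i ∧ i ≤ n) ∧
      q = ((n : ℝ) + (a : ℝ) + (i : ℝ), 2 * (n : ℝ) + 1 - 2 * (i : ℝ)) := by
  rw [Rset]
  simp only [Finset.mem_image, Finset.mem_Icc]
  constructor
  · rintro ⟨x, hx, rfl⟩
    simp at hx
    obtain ⟨i, hi, rfl⟩ := hx
    exact ⟨i, hi, rfl⟩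
  · rintro ⟨i, hi, rfl⟩
    refine ⟨(i : ℝ), ?_, rfl⟩
    simp
    exact hi

/-- First occurrence position in `B` of the color `c`. -/
noncomputable def fC (a k : ℕ) (χ : ℝ × ℝ → Fin k) (c : Fin k) : ℕ :=
  sInf {i : ℕ | 1 ≤ i ∧ i ≤ a ∧ χ ((i : ℝ), 0) = c}

/-- Rank of a low color in the order of first occurrence. -/
noncomputable def rC (a k : ℕ) (χ : ℝ × ℝ → Fin k) (c : Fin k) : ℕ :=
  ((lowColors a k χ).filter (fun c' => fC a k χ c' < fC a k χ c)).card

lemma mem_low_iff {a k : ℕ} {χ : ℝ × ℝ → Fin k} {c : Fin k} :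
    c ∈ lowColors a k χ ↔ ∃ i, 1 ≤ i ∧ i ≤ a ∧ χ ((i : ℝ), 0) = c := by
  rw [lowColors, Finset.mem_filter]
  constructor
  · rintro ⟨-, q, hq, hqc⟩
    obtain ⟨i, hi, rfl⟩ := mem_Bset.mp hq
    exact ⟨i, hi.1, hi.2, hqc⟩
  · rintro ⟨i, h1, h2, hc⟩
    exact ⟨Finset.mem_univ _, ⟨_, mem_Bset.mpr ⟨i, ⟨h1, h2⟩, rfl⟩, hc⟩⟩

lemma fC_spec {a k : ℕ} {χ : ℝ × ℝ → Fin k} {c : Fin k} (hc : c ∈ lowColors a k χ) :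
    1 ≤ fC a k χ c ∧ fC a k χ c ≤ a ∧ χ ((fC a k χ c : ℝ), 0) = c :=
  Nat.sInf_mem (mem_low_iff.mp hc)

lemma fC_min {a k : ℕ} {χ : ℝ × ℝ → Fin k} {c : Fin k} {i : ℕ}
    (h1 : 1 ≤ i) (h2 : i ≤ a) (h3 : χ ((i : ℝ), 0) = c) : fC a k χ c ≤ i :=
  Nat.sInf_le ⟨h1, h2, h3⟩

lemma fC_injOn {a k : ℕ} {χ : ℝ × ℝ → Fin k} {c c' : Fin k}
    (hc : c ∈ lowColors a k χ) (hc' : c' ∈ lowColors a k χ)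
    (h : fC a k χ c = fC a k χ c') : c = c' := by
  have h1 := (fC_spec hc).2.2
  have h2 := (fC_spec hc').2.2
  rw [← h1, ← h2, h]

/-- The rank is at most `fC - 1`. -/
lemma rC_le {a k : ℕ} {χ : ℝ × ℝ → Fin k} {c : Fin k} (hc : c ∈ lowColors a k χ) :
    rC a k χ c ≤ fC a k χ c - 1 := by
  have := Finset.card_le_card_of_injOn (fC a k χ)
    (s := (lowColors a k χ).filter (fun c' => fC a k χ c' < fC a k χ c))
    (t := Finset.Icc 1 (fC a k χ c - 1))
    (fun c' hc' => by
      simp only [Finset.mem_coe, Finset.mem_filter] at hc'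
      have h1 := (fC_spec hc'.1).1
      have h2 := hc'.2
      simp only [Finset.mem_coe, Finset.mem_Icc]
      omega)
    (fun x hx y hy hxy => fC_injOn (Finset.mem_filter.mp hx).1 (Finset.mem_filter.mp hy).1 hxy)
  simpa [Nat.card_Icc, rC] using this

lemma rC_strictMono {a k : ℕ} {χ : ℝ × ℝ → Fin k} {c c' : Fin k}
    (hc : c ∈ lowColors a k χ) (h : fC a k χ c < fC a k χ c') :
    rC a k χ c < rC a k χ c' := by
  apply Finset.card_lt_card
  constructor
  · intro x hx
    simp only [Finset.mem_filter] at hx ⊢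
    exact ⟨hx.1, hx.2.trans h⟩
  · intro hsub
    have hcmem : c ∈ (lowColors a k χ).filter (fun c'' => fC a k χ c'' < fC a k χ c') :=
      Finset.mem_filter.mpr ⟨hc, h⟩
    have := hsub hcmem
    simp only [Finset.mem_filter] at this
    omega

lemma rC_injOn {a k : ℕ} {χ : ℝ × ℝ → Fin k} {c c' : Fin k}
    (hc : c ∈ lowColors a k χ) (hc' : c' ∈ lowColors a k χ)
    (h : rC a k χ c = rC a k χ c') : c = c' := by
  rcases lt_trichotomy (fC a k χ c) (fC a k χ c') with hlt | heq | hgt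
  · exact absurd h (Nat.ne_of_lt (rC_strictMono hc hlt))
  · exact fC_injOn hc hc' heq
  · exact absurd h.symm (Nat.ne_of_lt (rC_strictMono hc' hgt))

lemma rC_lt {a k : ℕ} {χ : ℝ × ℝ → Fin k} {c : Fin k} (hc : c ∈ lowColors a k χ) :
    rC a k χ c < (lowColors a k χ).card := by
  apply Finset.card_lt_card
  constructor
  · exact Finset.filter_subset _ _
  · intro hsub
    have := hsub hc
    simp only [Finset.mem_filter] at this
    omega

lemma rC_image {a k : ℕ} {χ : ℝ × ℝ → Fin k} :
    (lowColors a k χ).image (rC a k χ) = Finset.range (lowColors a k χ).card := by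
  apply Finset.eq_of_subset_of_card_le
  · intro x hx
    simp only [Finset.mem_image] at hx
    obtain ⟨c, hc, rfl⟩ := hx
    exact Finset.mem_range.mpr (rC_lt hc)
  · rw [Finset.card_range, Finset.card_image_of_injOn (fun x hx y hy => rC_injOn hx hy)]

/-- Explicit description of a window rectangle's point set. -/
lemma filter_window (n a : ℕ) (hn : 1 ≤ n) (lo hi j : ℕ)
    (hlo : 1 ≤ lo) (hlon0 : lo ≤ n) (hhi : hi ≤ n) (hj : j ≤ a) :
    ((Lset n ∪ Bset a ∪ Rset n a).filter
        (InBottomless ((lo : ℝ) - (n : ℝ)) (j : ℝ) (2 * (hi : ℝ)))) =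
      ((Finset.Icc lo hi).image (fun i : ℕ => ((i : ℝ) - (n : ℝ), 2 * (i : ℝ)))) ∪
        ((Finset.Icc 1 j).image (fun i : ℕ => ((i : ℝ), (0 : ℝ)))) := by
  have hja : (j : ℝ) ≤ (a : ℝ) := Nat.cast_le.mpr hj
  have hn1 : (1 : ℝ) ≤ (n : ℝ) := Nat.one_le_cast.mpr hn
  have hlon : (lo : ℝ) ≤ (n : ℝ) := Nat.cast_le.mpr hlon0
  ext q
  rw [Finset.mem_filter, Finset.mem_union, Finset.mem_union, Finset.mem_union,
    mem_Lset, mem_Bset, mem_Rset, Finset.mem_image, Finset.mem_image]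
  constructor
  · rintro ⟨(⟨i, ⟨hi1, hi2⟩, rfl⟩ | ⟨i, ⟨hi1, hi2⟩, rfl⟩) | ⟨i, ⟨hi1, hi2⟩, rfl⟩, hb⟩
    · -- L point
      left
      have hb1 : (lo : ℝ) - (n : ℝ) ≤ (i : ℝ) - (n : ℝ) := hb.1
      have hb3 : 2 * (i : ℝ) ≤ 2 * (hi : ℝ) := hb.2.2
      refine ⟨i, Finset.mem_Icc.mpr ⟨?_, ?_⟩, rfl⟩
      · have : (lo : ℝ) ≤ (i : ℝ) := by linarith
        exact_mod_cast this
      · have : (i : ℝ) ≤ (hi : ℝ) := by linarith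
        exact_mod_cast this
    · -- B point
      right
      have hb2 : (i : ℝ) ≤ (j : ℝ) := hb.2.1
      exact ⟨i, Finset.mem_Icc.mpr ⟨hi1, by exact_mod_cast hb2⟩, rfl⟩
    · -- R point : impossible
      exfalso
      have hb2 : (n : ℝ) + (a : ℝ) + (i : ℝ) ≤ (j : ℝ) := hb.2.1
      have h1 : (1 : ℝ) ≤ (i : ℝ) := Nat.one_le_cast.mpr hi1
      linarith
  · rintro (⟨i, hmem, rfl⟩ | ⟨i, hmem, rfl⟩)
    · rw [Finset.mem_Icc] at hmem
      obtain ⟨hi1, hi2⟩ := hmem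
      have hii1 : 1 ≤ i := hlo.trans hi1
      have hii2 : i ≤ n := hi2.trans hhi
      have hc1 : (lo : ℝ) ≤ (i : ℝ) := Nat.cast_le.mpr hi1
      have hc2 : (i : ℝ) ≤ (hi : ℝ) := Nat.cast_le.mpr hi2
      have hc3 : (i : ℝ) ≤ (n : ℝ) := Nat.cast_le.mpr hii2
      have h0j : (0 : ℝ) ≤ (j : ℝ) := Nat.cast_nonneg j
      refine ⟨Or.inl (Or.inl ⟨i, ⟨hii1, hii2⟩, rfl⟩), ?_, ?_, ?_⟩
      · show (lo : ℝ) - (n : ℝ) ≤ (i : ℝ) - (n : ℝ)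
        linarith
      · show (i : ℝ) - (n : ℝ) ≤ (j : ℝ)
        linarith
      · show 2 * (i : ℝ) ≤ 2 * (hi : ℝ)
        linarith
    · rw [Finset.mem_Icc] at hmem
      obtain ⟨hi1, hi2⟩ := hmem
      have hia : i ≤ a := hi2.trans hj
      have hc1 : (1 : ℝ) ≤ (i : ℝ) := Nat.one_le_cast.mpr hi1
      have hc2 : (i : ℝ) ≤ (j : ℝ) := Nat.cast_le.mpr hi2
      have hhi0 : (0 : ℝ) ≤ (hi : ℝ) := Nat.cast_nonneg hi
      refine ⟨Or.inl (Or.inr ⟨i, ⟨hi1, hia⟩, rfl⟩), ?_, ?_, ?_⟩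
      · show (lo : ℝ) - (n : ℝ) ≤ (i : ℝ)
        linarith
      · show (i : ℝ) ≤ (j : ℝ)
        linarith
      · show (0 : ℝ) ≤ 2 * (hi : ℝ)
        linarith

lemma window_card (n : ℕ) (lo hi j : ℕ) (hlo : 1 ≤ lo) :
    (((Finset.Icc lo hi).image (fun i : ℕ => ((i : ℝ) - (n : ℝ), 2 * (i : ℝ)))) ∪
        ((Finset.Icc 1 j).image (fun i : ℕ => ((i : ℝ), (0 : ℝ))))).card
      = (hi + 1 - lo) + j := by
  have h1 : ((Finset.Icc lo hi).image (fun i : ℕ => ((i : ℝ) - (n : ℝ), 2 * (i : ℝ)))).card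
      = hi + 1 - lo := by
    have hinj : Set.InjOn (fun i : ℕ => ((i : ℝ) - (n : ℝ), 2 * (i : ℝ)))
        (Finset.Icc lo hi) := by
      intro x _ y _ hxy
      simp only [Prod.mk.injEq] at hxy
      have : (x : ℝ) = (y : ℝ) := by linarith [hxy.1]
      exact_mod_cast this
    rw [Finset.card_image_of_injOn hinj, Nat.card_Icc]
  have h2 : ((Finset.Icc 1 j).image (fun i : ℕ => ((i : ℝ), (0 : ℝ)))).card = j := by
    have hinj : Set.InjOn (fun i : ℕ => ((i : ℝ), (0 : ℝ))) (Finset.Icc 1 j) := by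
      intro x _ y _ hxy
      simp only [Prod.mk.injEq] at hxy
      exact_mod_cast hxy.1
    rw [Finset.card_image_of_injOn hinj, Nat.card_Icc]
    omega
  have hdisj : Disjoint
      ((Finset.Icc lo hi).image (fun i : ℕ => ((i : ℝ) - (n : ℝ), 2 * (i : ℝ))))
      ((Finset.Icc 1 j).image (fun i : ℕ => ((i : ℝ), (0 : ℝ)))) := by
    rw [Finset.disjoint_left]
    rintro q hq hq'
    obtain ⟨i, hi', rfl⟩ := Finset.mem_image.mp hq
    obtain ⟨i', hi'', heq⟩ := Finset.mem_image.mp hq'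
    simp only [Prod.mk.injEq] at heq
    simp only [Finset.mem_Icc] at hi'
    have : (1 : ℝ) ≤ (i : ℝ) := Nat.one_le_cast.mpr (hlo.trans hi'.1)
    linarith [heq.2]
  rw [Finset.card_union_of_disjoint hdisj, h1, h2]

end Aux

/-- Low points lemma: with `ℓ` low colors, `L` contains at least
`∑_{i=0}^{ℓ-1} ⌊n / (b - i)⌋` low points. -/
theorem low_points_in_L (n a b k : ℕ)
    (hn : 1 ≤ n) (hab : a < b) (hk : 1 ≤ k)
    (χ : ℝ × ℝ → Fin k)
    (hvalid : ∀ a' b' c' : ℝ, a' ≤ b' →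
      b ≤ ((Lset n ∪ Bset a ∪ Rset n a).filter (InBottomless a' b' c')).card →
      ∀ col : Fin k,
        ∃ q ∈ (Lset n ∪ Bset a ∪ Rset n a).filter (InBottomless a' b' c'), χ q = col) :
    ∑ i ∈ Finset.range (lowColors a k χ).card, n / (b - i) ≤
      ((Lset n).filter (fun q => χ q ∈ lowColors a k χ)).card := by
  classical
  set low := lowColors a k χ with hlowdef
  -- Step 1 : key per-color window lemma
  have key : ∀ c ∈ low, ∀ t, t < n / (b - rC a k χ c) →
      ∃ i, (t * (b - rC a k χ c) + 1 ≤ i ∧ i ≤ (t + 1) * (b - rC a k χ c)) ∧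
        χ ((i : ℝ) - (n : ℝ), 2 * (i : ℝ)) = c := by
    intro c hc t ht
    set r := rC a k χ c with hrdef
    set d := b - r with hddef
    have hf := fC_spec hc
    have hrle : r ≤ fC a k χ c - 1 := rC_le hc
    have hrb : r < b := by omega
    have hd1 : 1 ≤ d := by omega
    set lo := t * d + 1 with hlodef
    set hi := (t + 1) * d with hhidef
    set j := fC a k χ c - 1 with hjdef
    have hhin : hi ≤ n := by
      calc (t + 1) * d ≤ (n / d) * d := Nat.mul_le_mul_right d (by omega)
        _ ≤ n := Nat.div_mul_le_self n d
    have hlohi : lo ≤ hi := by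
      have : t * d + d = (t + 1) * d := by ring
      omega
    have hja : j ≤ a := by omega
    have heq := filter_window n a hn lo hi j (by omega) (hlohi.trans hhin) hhin hja
    have hcard := window_card n lo hi j (by omega)
    have hble : b ≤ ((Lset n ∪ Bset a ∪ Rset n a).filter
        (InBottomless ((lo : ℝ) - (n : ℝ)) (j : ℝ) (2 * (hi : ℝ)))).card := by
      rw [heq, hcard]
      have : hi + 1 - lo = d := by
        have : t * d + d = (t + 1) * d := by ring
        omega
      omega
    have hab' : ((lo : ℝ) - (n : ℝ)) ≤ (j : ℝ) := by
      have h1 : (lo : ℝ) ≤ (n : ℝ) := Nat.cast_le.mpr (hlohi.trans hhin)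
      have h2 : (0 : ℝ) ≤ (j : ℝ) := Nat.cast_nonneg j
      linarith
    obtain ⟨q, hq, hqc⟩ := hvalid _ _ _ hab' hble c
    rw [heq] at hq
    rcases Finset.mem_union.mp hq with hqL | hqB
    · obtain ⟨i, hi', rfl⟩ := Finset.mem_image.mp hqL
      simp only [Finset.mem_Icc] at hi'
      exact ⟨i, ⟨hi'.1, hi'.2⟩, hqc⟩
    · exfalso
      obtain ⟨i, hi', rfl⟩ := Finset.mem_image.mp hqB
      simp only [Finset.mem_Icc] at hi'
      have := fC_min (a := a) hi'.1 (by omega) hqc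
      omega
  -- Step 2 : per-color cardinality bound
  have percolor : ∀ c ∈ low,
      n / (b - rC a k χ c) ≤ ((Lset n).filter (fun q => χ q = c)).card := by
    intro c hc
    set r := rC a k χ c with hrdef
    set d := b - r with hddef
    have hf := fC_spec hc
    have hrle : r ≤ fC a k χ c - 1 := rC_le hc
    have hd1 : 1 ≤ d := by omega
    set m := n / d with hmdef
    have H : ∀ t : ℕ, ∃ i : ℕ, t < m →
        ((t * d + 1 ≤ i ∧ i ≤ (t + 1) * d) ∧ χ ((i : ℝ) - (n : ℝ), 2 * (i : ℝ)) = c) := by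
      intro t
      by_cases ht : t < m
      · obtain ⟨i, h1, h2⟩ := key c hc t ht
        exact ⟨i, fun _ => ⟨h1, h2⟩⟩
      · exact ⟨0, fun h => absurd h ht⟩
    choose g hg using H
    have hcard : (Finset.range m).card ≤ ((Lset n).filter (fun q => χ q = c)).card := by
      apply Finset.card_le_card_of_injOn (fun t => ((g t : ℝ) - (n : ℝ), 2 * (g t : ℝ)))
      · intro t ht
        rw [Finset.mem_coe, Finset.mem_range] at ht
        obtain ⟨⟨h1, h2⟩, h3⟩ := hg t ht
        have hgn : g t ≤ n := by
          calc g t ≤ (t + 1) * d := h2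
            _ ≤ m * d := Nat.mul_le_mul_right d (by omega)
            _ ≤ n := Nat.div_mul_le_self n d
        refine Finset.mem_filter.mpr ⟨?_, h3⟩
        exact mem_Lset.mpr ⟨g t, ⟨by omega, hgn⟩, rfl⟩
      · intro t ht t' ht' heq
        rw [Finset.mem_coe, Finset.mem_range] at ht ht'
        obtain ⟨⟨h1, h2⟩, _⟩ := hg t ht
        obtain ⟨⟨h1', h2'⟩, _⟩ := hg t' ht'
        simp only [Prod.mk.injEq] at heq
        have hgg : (g t : ℝ) = (g t' : ℝ) := by linarith [heq.1]
        have hgg' : g t = g t' := by exact_mod_cast hgg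
        by_contra hne
        rcases Nat.lt_or_ge t t' with hlt | hge
        · have : (t + 1) * d ≤ t' * d := Nat.mul_le_mul_right d (by omega)
          omega
        · have hlt' : t' < t := by omega
          have : (t' + 1) * d ≤ t * d := Nat.mul_le_mul_right d (by omega)
          omega
    rwa [Finset.card_range] at hcard
  -- Step 3 : sum manipulation
  have hsum : ∑ i ∈ Finset.range low.card, n / (b - i)
      = ∑ c ∈ low, n / (b - rC a k χ c) := by
    rw [← rC_image (a := a) (k := k) (χ := χ), Finset.sum_image
      (fun x hx y hy => rC_injOn hx hy)]
  rw [hsum]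
  -- Step 4 : decompose the filter as a disjoint union over colors
  have hdecomp : ((Lset n).filter (fun q => χ q ∈ low))
      = low.biUnion (fun c => (Lset n).filter (fun q => χ q = c)) := by
    ext q
    simp only [Finset.mem_filter, Finset.mem_biUnion]
    constructor
    · rintro ⟨hq, hχ⟩
      exact ⟨χ q, hχ, hq, rfl⟩
    · rintro ⟨c, hc, hq, rfl⟩
      exact ⟨hq, hc⟩
  rw [hdecomp, Finset.card_biUnion]
  · exact Finset.sum_le_sum percolor
  · intro c hc c' hc' hne
    rw [Function.onFun, Finset.disjoint_left]
    intro q hq hq'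
    simp only [Finset.mem_filter] at hq hq'
    exact hne (hq.2 ▸ hq'.2 ▸ rfl)
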